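/- (Theorem 1) Let D be any generating class (hierarchical model) and let b satisfy deg b = 2, F_b ≠ ∅ and Δ̄_b ≠ ∅. Then the number of elements of the fiber is exactly |F_b| = 2^{c(b)−1}, where c(b) is the number of connected components of the induced subgraph G(Δ̄_b). -/
import Mathlib


open Finset

variable {m : ℕ}

/-- The set of cells of an `m`-way contingency table with `I δ` levels for variable `δ`. -/
abbrev Cell (I : Fin m → ℕ) := ∀ δ : Fin m, Fin (I δ)

/-- Marginal cells for a subset `D` of the variables. -/
abbrev PCell (I : Fin m → ℕ) (D : Finset (Fin m)) := ∀ δ : {x // x ∈ D}, Fin (I δ.1)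

/-- Restriction of a cell to the variables in `D`. -/
def restrictC (I : Fin m → ℕ) (D : Finset (Fin m)) (i : Cell I) : PCell I D :=
  fun δ => i δ.1

/-- The `D`-marginal of a contingency table `n`. -/
def margin (I : Fin m → ℕ) (n : Cell I → ℕ) (D : Finset (Fin m)) (f : PCell I D) : ℕ :=
  ∑ i : Cell I, if restrictC I D i = f then n i else 0

/-- The fiber of `b = A n₀`, i.e. all tables sharing all `D`-marginals, `D ∈ 𝒟`, with `n₀`. -/
def fiber (I : Fin m → ℕ) (𝒟 : Finset (Finset (Fin m))) (n₀ : Cell I → ℕ) :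
    Set (Cell I → ℕ) :=
  {n | ∀ D ∈ 𝒟, ∀ f : PCell I D, margin I n D f = margin I n₀ D f}

/-- Sample size (total frequency) of a table. -/
def total (I : Fin m → ℕ) (n : Cell I → ℕ) : ℕ := ∑ i : Cell I, n i

/-- The one-dimensional marginal of `n` for variable `δ` at level `v`. -/
def margin1 (I : Fin m → ℕ) (n : Cell I → ℕ) (δ : Fin m) (v : Fin (I δ)) : ℕ :=
  ∑ i : Cell I, if i δ = v then n i else 0

/-- For a degree two fiber represented by `n₀`, variable `δ` is degenerate if a single
level has one-dimensional marginal `2`. -/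
def Degenerate (I : Fin m → ℕ) (n₀ : Cell I → ℕ) (δ : Fin m) : Prop :=
  ∃ v : Fin (I δ), margin1 I n₀ δ v = 2

/-- Variable `δ` is non-degenerate if two distinct levels each have one-dimensional
marginal `1`. -/
def Nondegenerate (I : Fin m → ℕ) (n₀ : Cell I → ℕ) (δ : Fin m) : Prop :=
  ∃ v w : Fin (I δ), v ≠ w ∧ margin1 I n₀ δ v = 1 ∧ margin1 I n₀ δ w = 1

/-- The independence graph of a generating class `𝒟`: an edge between two distinct
variables iff some `D ∈ 𝒟` contains both. -/
def indepGraph (𝒟 : Finset (Finset (Fin m))) : SimpleGraph (Fin m) :=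
  SimpleGraph.fromRel (fun a b => ∃ D ∈ 𝒟, a ∈ D ∧ b ∈ D)

/-- The set of non-degenerate variables `Δ̄_b`. -/
def ndSet (I : Fin m → ℕ) (n₀ : Cell I → ℕ) : Set (Fin m) :=
  {δ | Nondegenerate I n₀ δ}


section auxcount

lemma aux_count {K : Type*} [Finite K] (c₀ : K) :
    Nat.card {s : K → Bool // s c₀ = true} = 2 ^ (Nat.card K - 1) := by
  classical
  have e : {s : K → Bool // s c₀ = true} ≃ ({c : K // c ≠ c₀} → Bool) :=
    { toFun := fun s c => s.1 c.1
      invFun := fun t => ⟨fun c => if h : c = c₀ then true else t ⟨c, h⟩, by simp⟩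
      left_inv := by
        rintro ⟨s, hs⟩
        ext c
        by_cases h : c = c₀
        · subst h; simp [hs]
        · simp [h]
      right_inv := by
        intro t; funext c; simp [c.2] }
  rw [Nat.card_congr e, Nat.card_fun]
  have h2 : Nat.card Bool = 2 := by simp [Nat.card_eq_fintype_card]
  have h3 : Nat.card {c : K // c ≠ c₀} = Nat.card K - 1 := by
    haveI := Fintype.ofFinite K
    simp only [Nat.card_eq_fintype_card]
    have := Fintype.card_subtype_compl (fun c : K => c = c₀)
    simp only [Fintype.card_subtype_eq] at this
    convert this using 2
  rw [h2, h3]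

end auxcount

section auxpairs
variable {γ : Type*} [Fintype γ] [DecidableEq γ]

lemma aux_sum_two {n : γ → ℕ} (h : ∑ i, n i = 2) {a b : γ} (hab : a ≠ b)
    (ha : n a ≠ 0) (hb : n b ≠ 0) :
    n = fun z => (if a = z then 1 else 0) + (if b = z then 1 else 0) := by
  have h1 : n a + ∑ x ∈ univ.erase a, n x = ∑ x ∈ univ, n x :=
    Finset.add_sum_erase univ n (mem_univ a)
  have hbmem : b ∈ univ.erase a := Finset.mem_erase.mpr ⟨Ne.symm hab, mem_univ b⟩
  have h2 : n b + ∑ x ∈ (univ.erase a).erase b, n x = ∑ x ∈ univ.erase a, n x :=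
    Finset.add_sum_erase _ n hbmem
  have key : n a = 1 ∧ n b = 1 ∧ ∑ x ∈ (univ.erase a).erase b, n x = 0 := by omega
  have hrest : ∀ z ∈ (univ.erase a).erase b, n z = 0 :=
    (Finset.sum_eq_zero_iff).mp key.2.2
  funext z
  by_cases hza : z = a
  · subst hza
    have hbz : ¬ b = z := fun h' => hab h'.symm
    rw [if_pos rfl, if_neg hbz, key.1]
  · by_cases hzb : z = b
    · subst hzb
      have haz : ¬ a = z := hab
      rw [if_pos rfl, if_neg haz, key.2.1]
    · have hmem : z ∈ (univ.erase a).erase b :=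
        Finset.mem_erase.mpr ⟨hzb, Finset.mem_erase.mpr ⟨hza, mem_univ z⟩⟩
      have haz : ¬ a = z := fun h' => hza h'.symm
      have hbz : ¬ b = z := fun h' => hzb h'.symm
      rw [if_neg haz, if_neg hbz, hrest z hmem]

lemma aux_exists_pair {n : γ → ℕ} (h : ∑ i, n i = 2) :
    ∃ x y, n = fun z => (if x = z then 1 else 0) + (if y = z then 1 else 0) := by
  obtain ⟨x, -, hx⟩ := Finset.exists_ne_zero_of_sum_ne_zero (s := univ) (f := n)
    (by omega)
  have h1 : n x + ∑ z ∈ univ.erase x, n z = 2 := by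
    rw [Finset.add_sum_erase univ n (mem_univ x)]; exact h
  by_cases ht : ∑ z ∈ univ.erase x, n z = 0
  · refine ⟨x, x, funext fun z => ?_⟩
    by_cases hz : z = x
    · subst hz; rw [if_pos rfl]; omega
    · have hmem : z ∈ univ.erase x := Finset.mem_erase.mpr ⟨hz, mem_univ z⟩
      have hxz : ¬ x = z := fun h' => hz h'.symm
      rw [if_neg hxz, Finset.sum_eq_zero_iff.mp ht z hmem]; rfl
  · obtain ⟨y, hy, hy0⟩ := Finset.exists_ne_zero_of_sum_ne_zero ht
    have hxy : x ≠ y := fun h' => (Finset.mem_erase.mp hy).1 h'.symm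
    exact ⟨x, y, aux_sum_two h hxy hx hy0⟩

omit [Fintype γ] in
lemma aux_pair_eq {p q r s : γ}
    (h : ∀ f : γ, ((if p = f then 1 else 0) + (if q = f then 1 else 0) : ℕ)
      = (if r = f then 1 else 0) + (if s = f then 1 else 0)) :
    (p = r ∧ q = s) ∨ (p = s ∧ q = r) := by
  by_cases hpr : p = r
  · left
    refine ⟨hpr, ?_⟩
    by_contra hqs
    have hq := h q
    subst hpr
    rw [if_pos rfl, if_neg (fun h' => hqs h'.symm : ¬ s = q)] at hq
    omega
  · have hp := h p
    rw [if_pos rfl, if_neg (fun h' => hpr h'.symm : ¬ r = p)] at hp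
    have hsp : s = p := by
      by_contra hsp
      rw [if_neg hsp] at hp
      split_ifs at hp <;> omega
    rw [if_pos hsp] at hp
    have hqp : ¬ q = p := by intro h'; rw [if_pos h'] at hp; omega
    right
    refine ⟨hsp.symm, ?_⟩
    have hq := h q
    have hsq : ¬ s = q := by rw [hsp]; exact fun h' => hqp h'.symm
    rw [if_pos rfl, if_neg (fun h' => hqp h'.symm : ¬ p = q), if_neg hsq] at hq
    split_ifs at hq with hrq
    · exact hrq.symm
    · omega

end auxpairs

lemma aux_margin_pair (I : Fin m → ℕ) (x y : Cell I) (D : Finset (Fin m)) (f : PCell I D) :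
    margin I (fun z => (if x = z then 1 else 0) + (if y = z then 1 else 0)) D f
      = (if restrictC I D x = f then 1 else 0) + (if restrictC I D y = f then 1 else 0) := by
  unfold margin
  have key : ∀ i : Cell I,
      (if restrictC I D i = f then ((if x = i then 1 else 0) + (if y = i then 1 else 0)) else 0)
      = (if x = i then (if restrictC I D x = f then 1 else 0) else 0)
      + (if y = i then (if restrictC I D y = f then 1 else 0) else 0) := by
    intro i
    by_cases h1 : x = i <;> by_cases h2 : y = i <;> subst_eqs <;> simp_all <;>
      split_ifs <;> omega
  simp_rw [key]
  rw [Finset.sum_add_distrib, Finset.sum_ite_eq, Finset.sum_ite_eq]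
  simp

lemma aux_margin1_pair (I : Fin m → ℕ) (x y : Cell I) (δ : Fin m) (v : Fin (I δ)) :
    margin1 I (fun z => (if x = z then 1 else 0) + (if y = z then 1 else 0)) δ v
      = (if x δ = v then 1 else 0) + (if y δ = v then 1 else 0) := by
  unfold margin1
  have key : ∀ i : Cell I,
      (if i δ = v then ((if x = i then 1 else 0) + (if y = i then 1 else 0)) else 0)
      = (if x = i then (if x δ = v then 1 else 0) else 0)
      + (if y = i then (if y δ = v then 1 else 0) else 0) := by
    intro i
    by_cases h1 : x = i <;> by_cases h2 : y = i <;> subst_eqs <;> simp_all <;>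
      split_ifs <;> omega
  simp_rw [key]
  rw [Finset.sum_add_distrib, Finset.sum_ite_eq, Finset.sum_ite_eq]
  simp

/-- The "x"-cell of the table determined by a sign assignment on connected components. -/
def auxX (I : Fin m → ℕ) (a b : Cell I) (G : SimpleGraph (Fin m)) (S : Set (Fin m))
    (hS : ∀ δ, ¬ a δ = b δ → δ ∈ S)
    (s : (G.induce S).ConnectedComponent → Bool) : Cell I :=
  fun δ => if h : a δ = b δ then a δ
    else if s ((G.induce S).connectedComponentMk ⟨δ, hS δ h⟩) then a δ else b δ

/-- The "y"-cell of the table determined by a sign assignment on connected components. -/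
def auxY (I : Fin m → ℕ) (a b : Cell I) (G : SimpleGraph (Fin m)) (S : Set (Fin m))
    (hS : ∀ δ, ¬ a δ = b δ → δ ∈ S)
    (s : (G.induce S).ConnectedComponent → Bool) : Cell I :=
  fun δ => if h : a δ = b δ then b δ
    else if s ((G.induce S).connectedComponentMk ⟨δ, hS δ h⟩) then b δ else a δ

lemma auxX_d (I : Fin m → ℕ) (a b : Cell I) (G : SimpleGraph (Fin m)) (S : Set (Fin m))
    (hS : ∀ δ, ¬ a δ = b δ → δ ∈ S) (s : (G.induce S).ConnectedComponent → Bool)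
    {δ : Fin m} (h : a δ = b δ) : auxX I a b G S hS s δ = a δ := dif_pos h

lemma auxY_d (I : Fin m → ℕ) (a b : Cell I) (G : SimpleGraph (Fin m)) (S : Set (Fin m))
    (hS : ∀ δ, ¬ a δ = b δ → δ ∈ S) (s : (G.induce S).ConnectedComponent → Bool)
    {δ : Fin m} (h : a δ = b δ) : auxY I a b G S hS s δ = b δ := dif_pos h

lemma auxX_nd (I : Fin m → ℕ) (a b : Cell I) (G : SimpleGraph (Fin m)) (S : Set (Fin m))
    (hS : ∀ δ, ¬ a δ = b δ → δ ∈ S) (s : (G.induce S).ConnectedComponent → Bool)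
    {δ : Fin m} (h : ¬ a δ = b δ) (hδ : δ ∈ S) :
    auxX I a b G S hS s δ
      = if s ((G.induce S).connectedComponentMk ⟨δ, hδ⟩) then a δ else b δ := by
  unfold auxX; rw [dif_neg h]

lemma auxY_nd (I : Fin m → ℕ) (a b : Cell I) (G : SimpleGraph (Fin m)) (S : Set (Fin m))
    (hS : ∀ δ, ¬ a δ = b δ → δ ∈ S) (s : (G.induce S).ConnectedComponent → Bool)
    {δ : Fin m} (h : ¬ a δ = b δ) (hδ : δ ∈ S) :
    auxY I a b G S hS s δ
      = if s ((G.induce S).connectedComponentMk ⟨δ, hδ⟩) then b δ else a δ := by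
  unfold auxY; rw [dif_neg h]

/-- The table (fiber element) determined by a sign assignment on connected components. -/
def auxPhi (I : Fin m → ℕ) (a b : Cell I) (G : SimpleGraph (Fin m)) (S : Set (Fin m))
    (hS : ∀ δ, ¬ a δ = b δ → δ ∈ S)
    (s : (G.induce S).ConnectedComponent → Bool) : Cell I → ℕ :=
  fun z => (if auxX I a b G S hS s = z then 1 else 0) + (if auxY I a b G S hS s = z then 1 else 0)

/-- Theorem 1: a degree two fiber with `Δ̄_b ≠ ∅` has exactly
`2 ^ (c(b) - 1)` elements, where `c(b)` is the number of connected components of the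
induced subgraph `G(Δ̄_b)` of the independence graph. -/
theorem statement3 (I : Fin m → ℕ) (hI : ∀ δ, 2 ≤ I δ)
    (𝒟 : Finset (Finset (Fin m))) (hcov : ∀ δ : Fin m, ∃ D ∈ 𝒟, δ ∈ D)
    (n₀ : Cell I → ℕ)
    (hdeg : ∀ n ∈ fiber I 𝒟 n₀, total I n = 2)
    (hnd : ∃ δ, Nondegenerate I n₀ δ) :
    (fiber I 𝒟 n₀).ncard =
      2 ^ (Nat.card ((indepGraph 𝒟).induce (ndSet I n₀)).ConnectedComponent - 1) := by
  classical
  have hmem0 : n₀ ∈ fiber I 𝒟 n₀ := fun D _ f => rfl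
  have htot0 : ∑ i : Cell I, n₀ i = 2 := hdeg n₀ hmem0
  obtain ⟨δ₀, v₀, w₀, hvw, hv1, hw1⟩ := hnd
  have hex : ∀ v : Fin (I δ₀), margin1 I n₀ δ₀ v = 1 → ∃ a : Cell I, a δ₀ = v ∧ n₀ a ≠ 0 := by
    intro v hv
    have hne : (∑ i : Cell I, if i δ₀ = v then n₀ i else 0) ≠ 0 := by
      have he : margin1 I n₀ δ₀ v = ∑ i : Cell I, if i δ₀ = v then n₀ i else 0 := rfl
      rw [← he, hv]; exact one_ne_zero
    obtain ⟨c, -, hc⟩ := Finset.exists_ne_zero_of_sum_ne_zero hne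
    by_cases h : c δ₀ = v
    · exact ⟨c, h, by rwa [if_pos h] at hc⟩
    · rw [if_neg h] at hc; exact absurd rfl hc
  obtain ⟨a, ha0, ha⟩ := hex v₀ hv1
  obtain ⟨b, hb0, hb⟩ := hex w₀ hw1
  have habδ₀ : ¬ a δ₀ = b δ₀ := by rw [ha0, hb0]; exact hvw
  have hab : a ≠ b := fun h => habδ₀ (by rw [h])
  have hn₀ : n₀ = fun z => (if a = z then 1 else 0) + (if b = z then 1 else 0) :=
    aux_sum_two htot0 hab ha hb
  -- characterization of nondegeneracy
  have hND : ∀ δ, Nondegenerate I n₀ δ ↔ ¬ a δ = b δ := by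
    intro δ
    constructor
    · rintro ⟨v, w, hvw', h1, h2⟩ heq
      rw [hn₀, aux_margin1_pair, heq] at h1
      split_ifs at h1 <;> omega
    · intro hne
      refine ⟨a δ, b δ, hne, ?_, ?_⟩ <;> rw [hn₀, aux_margin1_pair]
      · rw [if_pos rfl, if_neg (fun h' => hne h'.symm : ¬ b δ = a δ)]
      · rw [if_pos rfl, if_neg hne]
  have hS : ∀ δ, ¬ a δ = b δ → δ ∈ ndSet I n₀ := fun δ h => (hND δ).mpr h
  have hNDmem : ∀ δ, δ ∈ ndSet I n₀ → ¬ a δ = b δ := fun δ h => (hND δ).mp h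
  -- adjacency from shared D
  have hAdj : ∀ u v : ↥(ndSet I n₀), u.1 ≠ v.1 → ∀ D ∈ 𝒟, u.1 ∈ D → v.1 ∈ D →
      ((indepGraph 𝒟).induce (ndSet I n₀)).Adj u v := by
    intro u v hne D hD hu hv
    have h : (indepGraph 𝒟).Adj u.1 v.1 := by
      rw [indepGraph, SimpleGraph.fromRel_adj]
      exact ⟨hne, Or.inl ⟨D, hD, hu, hv⟩⟩
    exact h
  -- fiber characterization
  have hfib : ∀ n : Cell I → ℕ, n ∈ fiber I 𝒟 n₀ ↔ ∃ x y : Cell I,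
      (n = fun z => (if x = z then 1 else 0) + (if y = z then 1 else 0)) ∧
      ∀ D ∈ 𝒟, (restrictC I D x = restrictC I D a ∧ restrictC I D y = restrictC I D b) ∨
        (restrictC I D x = restrictC I D b ∧ restrictC I D y = restrictC I D a) := by
    intro n
    constructor
    · intro hn
      obtain ⟨x, y, hxy⟩ := aux_exists_pair (hdeg n hn)
      refine ⟨x, y, hxy, fun D hD => ?_⟩
      apply aux_pair_eq
      intro f
      have h := hn D hD f
      rw [hxy, aux_margin_pair, hn₀, aux_margin_pair] at h
      exact h
    · rintro ⟨x, y, rfl, hc⟩ D hD f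
      rw [aux_margin_pair, hn₀, aux_margin_pair]
      rcases hc D hD with ⟨h1, h2⟩ | ⟨h1, h2⟩ <;> rw [h1, h2]
      exact add_comm _ _
  -- coordinatewise condition
  have hcoord : ∀ x y : Cell I,
      (∀ D ∈ 𝒟, (restrictC I D x = restrictC I D a ∧ restrictC I D y = restrictC I D b) ∨
        (restrictC I D x = restrictC I D b ∧ restrictC I D y = restrictC I D a)) →
      ∀ δ : Fin m, (x δ = a δ ∧ y δ = b δ) ∨ (x δ = b δ ∧ y δ = a δ) := by
    intro x y hc δ
    obtain ⟨D, hD, hδ⟩ := hcov δ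
    rcases hc D hD with ⟨h1, h2⟩ | ⟨h1, h2⟩
    · exact Or.inl ⟨congrFun h1 ⟨δ, hδ⟩, congrFun h2 ⟨δ, hδ⟩⟩
    · exact Or.inr ⟨congrFun h1 ⟨δ, hδ⟩, congrFun h2 ⟨δ, hδ⟩⟩
  -- signs are constant along edges
  have hsign : ∀ x y : Cell I,
      (∀ D ∈ 𝒟, (restrictC I D x = restrictC I D a ∧ restrictC I D y = restrictC I D b) ∨
        (restrictC I D x = restrictC I D b ∧ restrictC I D y = restrictC I D a)) →
      ∀ u v : ↥(ndSet I n₀), ((indepGraph 𝒟).induce (ndSet I n₀)).Adj u v →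
      ((x u.1 = a u.1) ↔ (x v.1 = a v.1)) := by
    intro x y hc u v huv
    have hGadj : (indepGraph 𝒟).Adj u.1 v.1 := huv
    rw [indepGraph, SimpleGraph.fromRel_adj] at hGadj
    obtain ⟨hne, hor⟩ := hGadj
    obtain ⟨D, hD, hu, hv⟩ : ∃ D ∈ 𝒟, u.1 ∈ D ∧ v.1 ∈ D := by
      rcases hor with ⟨D, hD, h1, h2⟩ | ⟨D, hD, h1, h2⟩
      exacts [⟨D, hD, h1, h2⟩, ⟨D, hD, h2, h1⟩]
    rcases hc D hD with ⟨h1, -⟩ | ⟨h1, -⟩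
    · constructor <;> intro _
      · exact congrFun h1 ⟨v.1, hv⟩
      · exact congrFun h1 ⟨u.1, hu⟩
    · have hxu : x u.1 = b u.1 := congrFun h1 ⟨u.1, hu⟩
      have hxv : x v.1 = b v.1 := congrFun h1 ⟨v.1, hv⟩
      have hu' : ¬ a u.1 = b u.1 := hNDmem u.1 u.2
      have hv' : ¬ a v.1 = b v.1 := hNDmem v.1 v.2
      constructor <;> intro h
      · exact absurd (h.symm.trans hxu) hu'
      · exact absurd (h.symm.trans hxv) hv'
  -- the base point and component
  have hδ₀S : δ₀ ∈ ndSet I n₀ := hS δ₀ habδ₀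
  set c₀ := ((indepGraph 𝒟).induce (ndSet I n₀)).connectedComponentMk ⟨δ₀, hδ₀S⟩ with hc₀
  -- the key construction lemma
  have main : ∀ x y : Cell I,
      (∀ D ∈ 𝒟, (restrictC I D x = restrictC I D a ∧ restrictC I D y = restrictC I D b) ∨
        (restrictC I D x = restrictC I D b ∧ restrictC I D y = restrictC I D a)) →
      x δ₀ = a δ₀ →
      ∃ s, s c₀ = true ∧ auxX I a b (indepGraph 𝒟) (ndSet I n₀) hS s = x ∧
        auxY I a b (indepGraph 𝒟) (ndSet I n₀) hS s = y := by
    intro x y hc hx0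
    have hw : ∀ (u v : ↥(ndSet I n₀)) (p : ((indepGraph 𝒟).induce (ndSet I n₀)).Walk u v),
        decide (x u.1 = a u.1) = decide (x v.1 = a v.1) := by
      intro u v p
      induction p with
      | nil => rfl
      | cons h p ih => exact (decide_eq_decide.mpr (hsign x y hc _ _ h)).trans ih
    refine ⟨SimpleGraph.ConnectedComponent.lift (fun u => decide (x u.1 = a u.1))
      (fun u v p _ => hw u v p), ?_, ?_, ?_⟩
    · rw [hc₀]
      exact decide_eq_true hx0
    · funext δ
      by_cases h : a δ = b δ
      · rw [auxX_d I a b _ _ hS _ h]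
        rcases hcoord x y hc δ with ⟨h1, -⟩ | ⟨h1, -⟩
        · exact h1.symm
        · exact (h1.trans h.symm).symm
      · rw [auxX_nd I a b _ _ hS _ h (hS δ h)]
        simp only [SimpleGraph.ConnectedComponent.lift_mk, decide_eq_true_eq]
        by_cases hx : x δ = a δ
        · rw [if_pos hx]
          exact hx.symm
        · rw [if_neg hx]
          rcases hcoord x y hc δ with ⟨h1, -⟩ | ⟨h1, -⟩
          · exact absurd h1 hx
          · exact h1.symm
    · funext δ
      by_cases h : a δ = b δ
      · rw [auxY_d I a b _ _ hS _ h]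
        rcases hcoord x y hc δ with ⟨-, h2⟩ | ⟨-, h2⟩
        · exact h2.symm
        · exact (h2.trans h).symm
      · rw [auxY_nd I a b _ _ hS _ h (hS δ h)]
        simp only [SimpleGraph.ConnectedComponent.lift_mk, decide_eq_true_eq]
        by_cases hx : x δ = a δ
        · rw [if_pos hx]
          rcases hcoord x y hc δ with ⟨-, h2⟩ | ⟨h1, -⟩
          · exact h2.symm
          · exact absurd (hx.symm.trans h1) h
        · rw [if_neg hx]
          rcases hcoord x y hc δ with ⟨h1, -⟩ | ⟨-, h2⟩
          · exact absurd h1 hx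
          · exact h2.symm
  -- the fiber is the image of the sign assignments
  have himg : fiber I 𝒟 n₀
      = auxPhi I a b (indepGraph 𝒟) (ndSet I n₀) hS '' {s | s c₀ = true} := by
    ext n
    constructor
    · intro hn
      obtain ⟨x, y, hxy, hc⟩ := (hfib n).mp hn
      rcases hcoord x y hc δ₀ with ⟨h1, h2⟩ | ⟨h1, h2⟩
      · obtain ⟨s, hs, hX, hY⟩ := main x y hc h1
        refine ⟨s, hs, ?_⟩
        rw [hxy]
        funext z
        simp only [auxPhi, hX, hY]
      · have hc' : ∀ D ∈ 𝒟,
            (restrictC I D y = restrictC I D a ∧ restrictC I D x = restrictC I D b) ∨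
            (restrictC I D y = restrictC I D b ∧ restrictC I D x = restrictC I D a) := by
          intro D hD
          rcases hc D hD with ⟨g1, g2⟩ | ⟨g1, g2⟩
          · exact Or.inr ⟨g2, g1⟩
          · exact Or.inl ⟨g2, g1⟩
        obtain ⟨s, hs, hX, hY⟩ := main y x hc' h2
        refine ⟨s, hs, ?_⟩
        rw [hxy]
        funext z
        simp only [auxPhi, hX, hY]
        exact add_comm _ _
    · rintro ⟨s, hs, rfl⟩
      refine (hfib _).mpr ⟨auxX I a b (indepGraph 𝒟) (ndSet I n₀) hS s,
        auxY I a b (indepGraph 𝒟) (ndSet I n₀) hS s, rfl, ?_⟩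
      intro D hD
      by_cases hDS : ∀ δ ∈ D, a δ = b δ
      · left
        constructor <;> (apply funext; rintro ⟨δ, hδ⟩)
        · exact auxX_d I a b _ _ hS s (hDS δ hδ)
        · exact auxY_d I a b _ _ hS s (hDS δ hδ)
      · push_neg at hDS
        obtain ⟨δ₁, hδ₁D, hδ₁⟩ := hDS
        have hcompeq : ∀ δ (h : ¬ a δ = b δ), δ ∈ D →
            ((indepGraph 𝒟).induce (ndSet I n₀)).connectedComponentMk ⟨δ, hS δ h⟩
            = ((indepGraph 𝒟).induce (ndSet I n₀)).connectedComponentMk ⟨δ₁, hS δ₁ hδ₁⟩ := by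
          intro δ h hδD
          by_cases he : δ = δ₁
          · subst he; rfl
          · exact SimpleGraph.ConnectedComponent.sound
              (hAdj _ _ he D hD hδD hδ₁D).reachable
        by_cases hs1 : s (((indepGraph 𝒟).induce (ndSet I n₀)).connectedComponentMk
            ⟨δ₁, hS δ₁ hδ₁⟩) = true
        · left
          constructor <;> (apply funext; rintro ⟨δ, hδ⟩)
          · show auxX I a b (indepGraph 𝒟) (ndSet I n₀) hS s δ = a δ
            by_cases h : a δ = b δ
            · exact auxX_d I a b _ _ hS s h
            · rw [auxX_nd I a b _ _ hS s h (hS δ h), hcompeq δ h hδ, if_pos hs1]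
          · show auxY I a b (indepGraph 𝒟) (ndSet I n₀) hS s δ = b δ
            by_cases h : a δ = b δ
            · exact auxY_d I a b _ _ hS s h
            · rw [auxY_nd I a b _ _ hS s h (hS δ h), hcompeq δ h hδ, if_pos hs1]
        · right
          constructor <;> (apply funext; rintro ⟨δ, hδ⟩)
          · show auxX I a b (indepGraph 𝒟) (ndSet I n₀) hS s δ = b δ
            by_cases h : a δ = b δ
            · rw [auxX_d I a b _ _ hS s h]; exact h
            · rw [auxX_nd I a b _ _ hS s h (hS δ h), hcompeq δ h hδ, if_neg hs1]
          · show auxY I a b (indepGraph 𝒟) (ndSet I n₀) hS s δ = a δ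
            by_cases h : a δ = b δ
            · rw [auxY_d I a b _ _ hS s h]; exact h.symm
            · rw [auxY_nd I a b _ _ hS s h (hS δ h), hcompeq δ h hδ, if_neg hs1]
  -- injectivity
  have hinj : Set.InjOn (auxPhi I a b (indepGraph 𝒟) (ndSet I n₀) hS)
      {s | s c₀ = true} := by
    intro s hs s' hs' heq
    have hs2 : s c₀ = true := hs
    have hs'2 : s' c₀ = true := hs'
    have h := aux_pair_eq (fun z => congrFun heq z)
    have hX0 : auxX I a b (indepGraph 𝒟) (ndSet I n₀) hS s δ₀ = a δ₀ := by
      rw [auxX_nd I a b _ _ hS s habδ₀ hδ₀S, ← hc₀, if_pos hs2]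
    have hY0' : auxY I a b (indepGraph 𝒟) (ndSet I n₀) hS s' δ₀ = b δ₀ := by
      rw [auxY_nd I a b _ _ hS s' habδ₀ hδ₀S, ← hc₀, if_pos hs'2]
    rcases h with ⟨h1, -⟩ | ⟨h1, -⟩
    · funext c
      induction c using SimpleGraph.ConnectedComponent.ind with
      | _ u =>
        obtain ⟨δ, hδ⟩ := u
        have hδ' : ¬ a δ = b δ := hNDmem δ hδ
        have e := congrFun h1 δ
        rw [auxX_nd I a b _ _ hS s hδ' hδ, auxX_nd I a b _ _ hS s' hδ' hδ] at e
        by_cases b1 : s (((indepGraph 𝒟).induce (ndSet I n₀)).connectedComponentMk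
            ⟨δ, hδ⟩) = true <;>
          by_cases b2 : s' (((indepGraph 𝒟).induce (ndSet I n₀)).connectedComponentMk
            ⟨δ, hδ⟩) = true
        · rw [b1, b2]
        · rw [if_pos b1, if_neg b2] at e; exact absurd e hδ'
        · rw [if_neg b1, if_pos b2] at e; exact absurd e.symm hδ'
        · rw [Bool.not_eq_true] at b1 b2; rw [b1, b2]
    · exfalso
      have e := congrFun h1 δ₀
      exact habδ₀ ((hX0.symm.trans e).trans hY0')
  -- conclusion
  rw [himg, Set.ncard_image_of_injOn hinj, ← Nat.card_coe_set_eq]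
  exact aux_count c₀
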